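/- Define E(c) = (4ρ²)/(15(ρ+1)) · (5(ρ+2)√(b + (b−a)/ρ) + (bρ + b + a)√(ρ/(bρ + b − a))), where ρ = c² − 1. Then for 0 < a < b, E is strictly increasing in c on (1, ∞), i.e., dE/dc > 0 for all c > 1. -/

import Mathlib

/-- The explicit energy of the Benney-Luke solitary wave of speed `c`, with `ρ = c² - 1`:
`E(c) = (4ρ²)/(15(ρ+1)) (5(ρ+2)√(b+(b−a)/ρ) + (bρ+b+a)√(ρ/(bρ+b−a)))`. -/
noncomputable def solitaryEnergy (a b c : ℝ) : ℝ :=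
  (4 * (c ^ 2 - 1) ^ 2) / (15 * ((c ^ 2 - 1) + 1)) *
    (5 * ((c ^ 2 - 1) + 2) * Real.sqrt (b + (b - a) / (c ^ 2 - 1)) +
      (b * (c ^ 2 - 1) + b + a) * Real.sqrt ((c ^ 2 - 1) / (b * (c ^ 2 - 1) + b - a)))

lemma energy_eq (a b : ℝ) (ha : 0 < a) (hab : a < b) {c : ℝ} (hc : 1 < c) :
    solitaryEnergy a b c =
      4 / 15 * (Real.sqrt ((c ^ 2 - 1) ^ 3) / c ^ 2) *
        ((6 * b * (c ^ 2 - 1) ^ 2 + (16 * b - 4 * a) * (c ^ 2 - 1) + 10 * (b - a)) /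
          Real.sqrt (b * (c ^ 2 - 1) + b - a)) := by
  have hρ : 0 < c ^ 2 - 1 := by nlinarith
  have hv : 0 < b * (c ^ 2 - 1) + b - a := by nlinarith
  have hsr : 0 < Real.sqrt (c ^ 2 - 1) := Real.sqrt_pos.2 hρ
  have hsv : 0 < Real.sqrt (b * (c ^ 2 - 1) + b - a) := Real.sqrt_pos.2 hv
  have h1 : Real.sqrt (b + (b - a) / (c ^ 2 - 1)) =
      Real.sqrt (b * (c ^ 2 - 1) + b - a) / Real.sqrt (c ^ 2 - 1) := by
    rw [← Real.sqrt_div hv.le]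
    congr 1
    field_simp
    ring
  have h2 : Real.sqrt ((c ^ 2 - 1) / (b * (c ^ 2 - 1) + b - a)) =
      Real.sqrt (c ^ 2 - 1) / Real.sqrt (b * (c ^ 2 - 1) + b - a) :=
    Real.sqrt_div hρ.le _
  have h3 : Real.sqrt ((c ^ 2 - 1) ^ 3) = (c ^ 2 - 1) * Real.sqrt (c ^ 2 - 1) := by
    rw [pow_succ, Real.sqrt_mul (by positivity), Real.sqrt_sq hρ.le]
  have hsr2 : Real.sqrt (c ^ 2 - 1) ^ 2 = c ^ 2 - 1 := Real.sq_sqrt hρ.le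
  have hsv2 : Real.sqrt (b * (c ^ 2 - 1) + b - a) ^ 2 = b * (c ^ 2 - 1) + b - a :=
    Real.sq_sqrt hv.le
  rw [solitaryEnergy, h1, h2, h3]
  have hc2 : (c:ℝ) ^ 2 ≠ 0 := by positivity
  generalize Real.sqrt (c ^ 2 - 1) = s at hsr hsr2 ⊢
  generalize Real.sqrt (b * (c ^ 2 - 1) + b - a) = t at hsv hsv2 ⊢
  field_simp
  linear_combination
    (c ^ 2 * ((c ^ 2 - 1) * (c ^ 2 * b + a) -
      (6 * b * (c ^ 2 - 1) ^ 2 + (16 * b - 4 * a) * (c ^ 2 - 1) + 10 * (b - a)))) * hsr2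
    + (5 * c ^ 2 * (c ^ 2 - 1) * ((c ^ 2 - 1) + 2)) * hsv2

lemma deriv_pieces (a b : ℝ) (ha : 0 < a) (hab : a < b) {c : ℝ} (hc : 1 < c) :
    HasDerivAt (fun c : ℝ => 4 / 15 * (Real.sqrt ((c ^ 2 - 1) ^ 3) / c ^ 2) *
        ((6 * b * (c ^ 2 - 1) ^ 2 + (16 * b - 4 * a) * (c ^ 2 - 1) + 10 * (b - a)) /
          Real.sqrt (b * (c ^ 2 - 1) + b - a)))
      (4 / 15 * ((c ^ 2 - 1) ^ 2 * (c ^ 2 + 2) / (Real.sqrt ((c ^ 2 - 1) ^ 3) * c ^ 3)) *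
          ((6 * b * (c ^ 2 - 1) ^ 2 + (16 * b - 4 * a) * (c ^ 2 - 1) + 10 * (b - a)) /
            Real.sqrt (b * (c ^ 2 - 1) + b - a)) +
        4 / 15 * (Real.sqrt ((c ^ 2 - 1) ^ 3) / c ^ 2) *
          (c * (2 * (12 * b * (c ^ 2 - 1) + 16 * b - 4 * a) * (b * (c ^ 2 - 1) + b - a) -
              b * (6 * b * (c ^ 2 - 1) ^ 2 + (16 * b - 4 * a) * (c ^ 2 - 1) + 10 * (b - a))) /
            Real.sqrt (b * (c ^ 2 - 1) + b - a) ^ 3)) c := by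
  have hρ : 0 < c ^ 2 - 1 := by nlinarith
  have hv : 0 < b * (c ^ 2 - 1) + b - a := by nlinarith
  have h3 : 0 < (c ^ 2 - 1) ^ 3 := by positivity
  have hs3 : 0 < Real.sqrt ((c ^ 2 - 1) ^ 3) := Real.sqrt_pos.2 h3
  have hs3sq : Real.sqrt ((c ^ 2 - 1) ^ 3) ^ 2 = (c ^ 2 - 1) ^ 3 := Real.sq_sqrt h3.le
  have hsv : 0 < Real.sqrt (b * (c ^ 2 - 1) + b - a) := Real.sqrt_pos.2 hv
  have hsvsq : Real.sqrt (b * (c ^ 2 - 1) + b - a) ^ 2 = b * (c ^ 2 - 1) + b - a :=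
    Real.sq_sqrt hv.le
  have hc0 : (0:ℝ) < c := by linarith
  have h0 : HasDerivAt (fun x : ℝ => x ^ 2 - 1) (2 * c) c := by
    simpa using (hasDerivAt_pow 2 c).sub_const 1
  -- A = sqrt((c²-1)³)/c²
  have hA0 : HasDerivAt (fun x : ℝ => Real.sqrt ((x ^ 2 - 1) ^ 3))
      ((3 * (c ^ 2 - 1) ^ 2 * (2 * c)) / (2 * Real.sqrt ((c ^ 2 - 1) ^ 3))) c := by
    have := (h0.pow 3).sqrt (ne_of_gt h3)
    refine this.congr_deriv (Eq.symm ?_)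
    norm_num
  have hA : HasDerivAt (fun x : ℝ => Real.sqrt ((x ^ 2 - 1) ^ 3) / x ^ 2)
      ((c ^ 2 - 1) ^ 2 * (c ^ 2 + 2) / (Real.sqrt ((c ^ 2 - 1) ^ 3) * c ^ 3)) c := by
    have := hA0.div (hasDerivAt_pow 2 c) (by positivity)
    refine this.congr_deriv (Eq.symm ?_)
    push_cast
    generalize Real.sqrt ((c ^ 2 - 1) ^ 3) = s at hs3 hs3sq ⊢
    field_simp
    linear_combination 2 * hs3sq
  -- D = P / sqrt(v)
  have hP : HasDerivAt (fun x : ℝ =>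
      6 * b * (x ^ 2 - 1) ^ 2 + (16 * b - 4 * a) * (x ^ 2 - 1) + 10 * (b - a))
      ((12 * b * (c ^ 2 - 1) + 16 * b - 4 * a) * (2 * c)) c := by
    have := (((h0.pow 2).const_mul (6*b)).add (h0.const_mul (16*b-4*a))).add_const (10*(b-a))
    refine this.congr_deriv (Eq.symm ?_)
    push_cast; ring
  have hV : HasDerivAt (fun x : ℝ => b * (x ^ 2 - 1) + b - a) (b * (2 * c)) c := by
    have := ((h0.const_mul b).add_const b).sub_const a
    refine this.congr_deriv rfl
  have hSV : HasDerivAt (fun x : ℝ => Real.sqrt (b * (x ^ 2 - 1) + b - a))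
      (b * (2 * c) / (2 * Real.sqrt (b * (c ^ 2 - 1) + b - a))) c := hV.sqrt (ne_of_gt hv)
  have hD : HasDerivAt (fun x : ℝ =>
      (6 * b * (x ^ 2 - 1) ^ 2 + (16 * b - 4 * a) * (x ^ 2 - 1) + 10 * (b - a)) /
        Real.sqrt (b * (x ^ 2 - 1) + b - a))
      (c * (2 * (12 * b * (c ^ 2 - 1) + 16 * b - 4 * a) * (b * (c ^ 2 - 1) + b - a) -
          b * (6 * b * (c ^ 2 - 1) ^ 2 + (16 * b - 4 * a) * (c ^ 2 - 1) + 10 * (b - a))) /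
        Real.sqrt (b * (c ^ 2 - 1) + b - a) ^ 3) c := by
    have := hP.div hSV (ne_of_gt hsv)
    refine this.congr_deriv (Eq.symm ?_)
    generalize Real.sqrt (b * (c ^ 2 - 1) + b - a) = t at hsv hsvsq ⊢
    field_simp
    linear_combination (-2 * (b * (12 * (c ^ 2 - 1) + 16) - 4 * a)) * hsvsq
  have := (hA.const_mul (4/15 : ℝ)).mul hD
  refine this.congr_deriv rfl


lemma hasDerivAt_energy (a b : ℝ) (ha : 0 < a) (hab : a < b) {c : ℝ} (hc : 1 < c) :
    HasDerivAt (solitaryEnergy a b)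
      (4 / 15 * ((c ^ 2 - 1) ^ 2 * (c ^ 2 + 2) / (Real.sqrt ((c ^ 2 - 1) ^ 3) * c ^ 3)) *
          ((6 * b * (c ^ 2 - 1) ^ 2 + (16 * b - 4 * a) * (c ^ 2 - 1) + 10 * (b - a)) /
            Real.sqrt (b * (c ^ 2 - 1) + b - a)) +
        4 / 15 * (Real.sqrt ((c ^ 2 - 1) ^ 3) / c ^ 2) *
          (c * (2 * (12 * b * (c ^ 2 - 1) + 16 * b - 4 * a) * (b * (c ^ 2 - 1) + b - a) -
              b * (6 * b * (c ^ 2 - 1) ^ 2 + (16 * b - 4 * a) * (c ^ 2 - 1) + 10 * (b - a))) /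
            Real.sqrt (b * (c ^ 2 - 1) + b - a) ^ 3)) c := by
  refine (deriv_pieces a b ha hab hc).congr_of_eventuallyEq ?_
  filter_upwards [isOpen_Ioi.mem_nhds (show c ∈ Set.Ioi (1:ℝ) from hc)] with x hx
  exact energy_eq a b ha hab hx

lemma deriv_val_pos (a b : ℝ) (ha : 0 < a) (hab : a < b) {c : ℝ} (hc : 1 < c) :
    0 < 4 / 15 * ((c ^ 2 - 1) ^ 2 * (c ^ 2 + 2) / (Real.sqrt ((c ^ 2 - 1) ^ 3) * c ^ 3)) *
          ((6 * b * (c ^ 2 - 1) ^ 2 + (16 * b - 4 * a) * (c ^ 2 - 1) + 10 * (b - a)) /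
            Real.sqrt (b * (c ^ 2 - 1) + b - a)) +
        4 / 15 * (Real.sqrt ((c ^ 2 - 1) ^ 3) / c ^ 2) *
          (c * (2 * (12 * b * (c ^ 2 - 1) + 16 * b - 4 * a) * (b * (c ^ 2 - 1) + b - a) -
              b * (6 * b * (c ^ 2 - 1) ^ 2 + (16 * b - 4 * a) * (c ^ 2 - 1) + 10 * (b - a))) /
            Real.sqrt (b * (c ^ 2 - 1) + b - a) ^ 3) := by
  have hρ : 0 < c ^ 2 - 1 := by nlinarith
  have hv : 0 < b * (c ^ 2 - 1) + b - a := by nlinarith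
  have hs3 : 0 < Real.sqrt ((c ^ 2 - 1) ^ 3) := Real.sqrt_pos.2 (by positivity)
  have hsv : 0 < Real.sqrt (b * (c ^ 2 - 1) + b - a) := Real.sqrt_pos.2 hv
  have hc0 : (0:ℝ) < c := by linarith
  have hb : 0 < b := lt_trans ha hab
  have hP : 0 < 6 * b * (c ^ 2 - 1) ^ 2 + (16 * b - 4 * a) * (c ^ 2 - 1) + 10 * (b - a) := by
    nlinarith [mul_pos hb hρ, sq_nonneg (c ^ 2 - 1)]
  have hQ : 0 < 2 * (12 * b * (c ^ 2 - 1) + 16 * b - 4 * a) * (b * (c ^ 2 - 1) + b - a) -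
      b * (6 * b * (c ^ 2 - 1) ^ 2 + (16 * b - 4 * a) * (c ^ 2 - 1) + 10 * (b - a)) := by
    nlinarith [mul_pos hb hρ, mul_pos (mul_pos hb hb) (mul_pos hρ hρ), mul_pos hb (mul_pos hρ hρ),
      mul_pos (mul_pos hb hρ) hρ, mul_pos ha hρ, mul_pos (mul_pos hb hb) hρ,
      mul_pos (mul_pos ha hb) hρ, sub_pos.2 hab]
  have t1 : 0 < 4 / 15 * ((c ^ 2 - 1) ^ 2 * (c ^ 2 + 2) / (Real.sqrt ((c ^ 2 - 1) ^ 3) * c ^ 3)) *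
      ((6 * b * (c ^ 2 - 1) ^ 2 + (16 * b - 4 * a) * (c ^ 2 - 1) + 10 * (b - a)) /
        Real.sqrt (b * (c ^ 2 - 1) + b - a)) := by
    apply mul_pos (mul_pos (by norm_num) _) (div_pos hP hsv)
    exact div_pos (by positivity) (by positivity)
  have t2 : 0 < 4 / 15 * (Real.sqrt ((c ^ 2 - 1) ^ 3) / c ^ 2) *
      (c * (2 * (12 * b * (c ^ 2 - 1) + 16 * b - 4 * a) * (b * (c ^ 2 - 1) + b - a) -
          b * (6 * b * (c ^ 2 - 1) ^ 2 + (16 * b - 4 * a) * (c ^ 2 - 1) + 10 * (b - a))) /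
        Real.sqrt (b * (c ^ 2 - 1) + b - a) ^ 3) := by
    apply mul_pos (mul_pos (by norm_num) (div_pos hs3 (by positivity)))
    exact div_pos (mul_pos hc0 hQ) (by positivity)
  linarith

/-- For `0 < a < b`, the solitary-wave energy `E(c)` is strictly increasing on `(1, ∞)`,
i.e. `dE/dc > 0` for every `c > 1`. -/
theorem solitaryEnergy_strictMono (a b : ℝ) (ha : 0 < a) (hab : a < b) :
    StrictMonoOn (solitaryEnergy a b) (Set.Ioi 1) ∧
      ∀ c : ℝ, 1 < c → 0 < deriv (solitaryEnergy a b) c := by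
  have hderiv : ∀ c : ℝ, 1 < c → 0 < deriv (solitaryEnergy a b) c := by
    intro c hc
    rw [(hasDerivAt_energy a b ha hab hc).deriv]
    exact deriv_val_pos a b ha hab hc
  refine ⟨?_, hderiv⟩
  apply strictMonoOn_of_deriv_pos (convex_Ioi 1)
  · intro x hx
    exact ((hasDerivAt_energy a b ha hab hx).differentiableAt.continuousAt).continuousWithinAt
  · intro x hx
    rw [interior_Ioi] at hx
    exact hderiv x hx
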